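/- (Kanter's representation of the positive stable distribution) Let 0 < α < 2 and define Zolotarev's kernel A(u) = [sin((α/2)u)]^(α/2) · [sin((1−α/2)u)]^(1−α/2) / sin(u) for u ∈ (0,π). Let W be exponentially distributed with rate 1 and U uniformly distributed on (0,π), independent of W. Then for every p > 0, P( (A(U)/W)^((2−α)/α) ≤ p ) = (1/π) ∫_0^π exp(−p^(−α/(2−α)) A(u)) du; that is, (A(U)/W)^((2−α)/α) has the CDF F_P(p|α) = (1/π)∫_0^π exp(−p^(−α/(2−α)) A(u)) du of the positive stable distribution S(α/2, 1, [cos(πα/4)]^(2/α), 0). -/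

import Mathlib

open MeasureTheory ProbabilityTheory Set

/-- Kanter's representation of the positive stable distribution: with Zolotarev's kernel
`A(u) = [sin((α/2)u)]^{α/2}·[sin((1−α/2)u)]^{1−α/2}/sin(u)` on `(0,π)`, if `W ∼ Exp(1)`
and `U ∼ Uniform(0,π)` are independent, then for every `p > 0`,
`P((A(U)/W)^{(2−α)/α} ≤ p) = (1/π)·∫₀^π exp(−p^{−α/(2−α)}·A(u)) du`. -/
theorem stmt_10 {Ω : Type*} [MeasureSpace Ω] [IsProbabilityMeasure (ℙ : Measure Ω)]
    (α : ℝ) (hα : 0 < α ∧ α < 2)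
    (A : ℝ → ℝ)
    (hA : ∀ u ∈ Ioo 0 Real.pi, A u =
      Real.sin (α / 2 * u) ^ (α / 2) * Real.sin ((1 - α / 2) * u) ^ (1 - α / 2)
        / Real.sin u)
    (W U : Ω → ℝ) (hWm : Measurable W) (hUm : Measurable U)
    (hindep : IndepFun W U ℙ)
    (hW : Measure.map W ℙ = volume.withDensity (fun w => ENNReal.ofReal
      (Set.indicator (Ioi (0:ℝ)) (fun w => Real.exp (-w)) w)))
    (hU : Measure.map U ℙ = (ENNReal.ofReal Real.pi)⁻¹ • volume.restrict (Ioo 0 Real.pi)) :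
    ∀ p : ℝ, 0 < p →
      ℙ {ω | (A (U ω) / W ω) ^ ((2 - α) / α) ≤ p} =
        ENNReal.ofReal ((1 / Real.pi) *
          ∫ u in Ioo 0 Real.pi, Real.exp (-(p ^ (-(α / (2 - α))) * A u))) := by
  obtain ⟨hα0, hα2⟩ := hα
  intro p hp
  have h2α : (0:ℝ) < 2 - α := by linarith
  set β : ℝ := α / (2 - α) with hβ
  have hβpos : 0 < β := div_pos hα0 h2α
  -- the explicit (measurable) kernel
  set A' : ℝ → ℝ := fun u =>
    Real.sin (α / 2 * u) ^ (α / 2) * Real.sin ((1 - α / 2) * u) ^ (1 - α / 2)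
      / Real.sin u with hA'def
  have hA'm : Measurable A' := by unfold A'; fun_prop
  have hA'pos : ∀ u ∈ Ioo 0 Real.pi, 0 < A' u := by
    rintro u ⟨hu0, huπ⟩
    have h1 : 0 < Real.sin (α / 2 * u) := by
      apply Real.sin_pos_of_pos_of_lt_pi
      · positivity
      · calc α / 2 * u < 1 * u := by
              apply mul_lt_mul_of_pos_right _ hu0; linarith
          _ = u := one_mul u
          _ < Real.pi := huπ
    have h2 : 0 < Real.sin ((1 - α / 2) * u) := by
      apply Real.sin_pos_of_pos_of_lt_pi
      · apply mul_pos _ hu0; linarith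
      · calc (1 - α / 2) * u ≤ 1 * u := by
              apply mul_le_mul_of_nonneg_right _ hu0.le; linarith
          _ = u := one_mul u
          _ < Real.pi := huπ
    have h3 : 0 < Real.sin u := Real.sin_pos_of_pos_of_lt_pi hu0 huπ
    exact div_pos (mul_pos (Real.rpow_pos_of_pos h1 _) (Real.rpow_pos_of_pos h2 _)) h3
  -- threshold function
  set t : ℝ → ℝ := fun u => p ^ (-β) * A' u with htdef
  have htm : Measurable t := measurable_const.mul hA'm
  -- a.e. facts
  have hUae : ∀ᵐ ω ∂ℙ, U ω ∈ Ioo 0 Real.pi := by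
    rw [ae_iff]
    have : {ω | ¬ U ω ∈ Ioo 0 Real.pi} = U ⁻¹' (Ioo 0 Real.pi)ᶜ := rfl
    rw [this, ← Measure.map_apply hUm measurableSet_Ioo.compl, hU, Measure.smul_apply,
      Measure.restrict_apply measurableSet_Ioo.compl, compl_inter_self, measure_empty,
      smul_zero]
  have hWae : ∀ᵐ ω ∂ℙ, 0 < W ω := by
    rw [ae_iff]
    have : {ω | ¬ 0 < W ω} = W ⁻¹' (Ioi (0:ℝ))ᶜ := rfl
    rw [this, ← Measure.map_apply hWm measurableSet_Ioi.compl, hW,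
      withDensity_apply _ measurableSet_Ioi.compl]
    have h0 : ∫⁻ w in (Ioi (0:ℝ))ᶜ,
        ENNReal.ofReal ((Ioi (0:ℝ)).indicator (fun w => Real.exp (-w)) w) =
        ∫⁻ _ in (Ioi (0:ℝ))ᶜ, (0:ENNReal) := by
      apply setLIntegral_congr_fun measurableSet_Ioi.compl
      intro w hw
      beta_reduce
      rw [indicator_of_notMem hw, ENNReal.ofReal_zero]
    rw [h0, lintegral_zero]
  -- the event rewritten
  have hset : {ω | (A (U ω) / W ω) ^ ((2 - α) / α) ≤ p} =ᵐ[ℙ] {ω | t (U ω) ≤ W ω} := by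
    rw [Filter.eventuallyEq_set]
    filter_upwards [hUae, hWae] with ω hu hw
    have hx : 0 < A' (U ω) / W ω := div_pos (hA'pos _ hu) hw
    have hinv : (2 - α) / α = β⁻¹ := by rw [hβ, inv_div]
    show (A (U ω) / W ω) ^ ((2 - α) / α) ≤ p ↔ t (U ω) ≤ W ω
    rw [show A (U ω) = A' (U ω) from hA _ hu]
    rw [hinv, Real.rpow_inv_le_iff_of_pos hx.le hp.le hβpos,
      show t (U ω) = p ^ (-β) * A' (U ω) from rfl,
      Real.rpow_neg hp.le, div_le_iff₀ hw,
      inv_mul_le_iff₀ (Real.rpow_pos_of_pos hp β)]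
  rw [measure_congr hset]
  -- use independence to compute via the product measure
  have hSm : MeasurableSet {q : ℝ × ℝ | t q.1 ≤ q.2} :=
    measurableSet_le (htm.comp measurable_fst) measurable_snd
  have hmap : ℙ {ω | t (U ω) ≤ W ω} =
      ((Measure.map U ℙ).prod (Measure.map W ℙ)) {q : ℝ × ℝ | t q.1 ≤ q.2} := by
    rw [← (indepFun_iff_map_prod_eq_prod_map_map hUm.aemeasurable hWm.aemeasurable).1
      hindep.symm, Measure.map_apply (hUm.prodMk hWm) hSm]
    rfl
  rw [hmap, Measure.prod_apply hSm]
  have hfiber : ∀ u : ℝ, (Prod.mk u ⁻¹' {q : ℝ × ℝ | t q.1 ≤ q.2}) = Ici (t u) := by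
    intro u; rfl
  -- exponential tail
  have hWIci : ∀ c : ℝ, 0 < c →
      (Measure.map W ℙ) (Ici c) = ENNReal.ofReal (Real.exp (-c)) := by
    intro c hc
    rw [hW, withDensity_apply _ measurableSet_Ici]
    have h1 : ∫⁻ w in Ici c,
        ENNReal.ofReal ((Ioi (0:ℝ)).indicator (fun w => Real.exp (-w)) w) =
        ∫⁻ w in Ici c, ENNReal.ofReal (Real.exp (-w)) := by
      apply setLIntegral_congr_fun measurableSet_Ici
      intro w hw
      beta_reduce
      rw [Set.indicator_of_mem (show w ∈ Ioi (0:ℝ) from lt_of_lt_of_le hc hw)]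
    have hint : IntegrableOn (fun w => Real.exp (-w)) (Ici c) volume := by
      rw [integrableOn_Ici_iff_integrableOn_Ioi]
      simpa using exp_neg_integrableOn_Ioi c one_pos
    rw [h1, ← ofReal_integral_eq_lintegral_ofReal hint
      (ae_of_all _ fun w => (Real.exp_pos _).le),
      MeasureTheory.integral_Ici_eq_integral_Ioi, integral_exp_neg_Ioi]
  -- compute the lintegral
  have hlin : ∫⁻ u, (Measure.map W ℙ) (Prod.mk u ⁻¹' {q : ℝ × ℝ | t q.1 ≤ q.2})
      ∂(Measure.map U ℙ) =
      (ENNReal.ofReal Real.pi)⁻¹ *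
        ∫⁻ u in Ioo 0 Real.pi, ENNReal.ofReal (Real.exp (-t u)) := by
    rw [hU, lintegral_smul_measure]
    congr 1
    apply setLIntegral_congr_fun measurableSet_Ioo
    intro u hu
    beta_reduce
    rw [hfiber u, hWIci (t u) (mul_pos (Real.rpow_pos_of_pos hp _) (hA'pos u hu))]
  rw [hlin]
  -- convert lintegral to Bochner integral
  have hInt : IntegrableOn (fun u => Real.exp (-t u)) (Ioo 0 Real.pi) volume := by
    apply Measure.integrableOn_of_bounded (M := 1)
    · exact (measure_Ioo_lt_top).ne
    · exact ((Real.measurable_exp.comp htm.neg)).aestronglyMeasurable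
    · apply ae_restrict_of_ae_restrict_of_subset (Subset.refl _)
      rw [ae_restrict_iff' measurableSet_Ioo]
      apply ae_of_all
      intro u hu
      rw [Real.norm_eq_abs, abs_of_pos (Real.exp_pos _)]
      apply Real.exp_le_one_iff.2
      have h2 : 0 < t u := mul_pos (Real.rpow_pos_of_pos hp (-β)) (hA'pos u hu)
      linarith
  have hofReal : ∫⁻ u in Ioo 0 Real.pi, ENNReal.ofReal (Real.exp (-t u)) =
      ENNReal.ofReal (∫ u in Ioo 0 Real.pi, Real.exp (-t u)) := by
    rw [ofReal_integral_eq_lintegral_ofReal hInt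
      (ae_of_all _ fun u => (Real.exp_pos _).le)]
  rw [hofReal]
  -- replace A' by A on the interval
  have hcong : ∫ u in Ioo 0 Real.pi, Real.exp (-t u) =
      ∫ u in Ioo 0 Real.pi, Real.exp (-(p ^ (-(α / (2 - α))) * A u)) := by
    apply setIntegral_congr_fun measurableSet_Ioo
    intro u hu
    show Real.exp (-t u) = Real.exp (-(p ^ (-(α / (2 - α))) * A u))
    rw [hA u hu, show t u = p ^ (-β) * A' u from rfl, hβ]
  rw [hcong]
  -- collect constants
  have hI : 0 ≤ ∫ u in Ioo 0 Real.pi, Real.exp (-(p ^ (-(α / (2 - α))) * A u)) :=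
    integral_nonneg fun u => (Real.exp_pos _).le
  rw [ENNReal.ofReal_mul (by positivity : (0:ℝ) ≤ 1 / Real.pi), one_div,
    ENNReal.ofReal_inv_of_pos Real.pi_pos]
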